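/- Let M be a left R-module, I an ideal of R, and K, L, H submodules of M. If K is an I-supplement of L in M and L is an I-supplement of H in M, then L is an I-supplement of K in M. -/

import Mathlib

open Submodule Function

/-- A submodule `N` of `M` is PSD in `M` if whenever `N + X = M`, there is a
projective direct summand `S` of `M` with `S ≤ N` and `M = S ⊕ X`. -/
def IsPSD (R : Type*) [Ring R] {M : Type*} [AddCommGroup M] [Module R M]
    (N : Submodule R M) : Prop :=
  ∀ X : Submodule R M, N ⊔ X = ⊤ →
    ∃ S : Submodule R M, S ≤ N ∧ Module.Projective R ↥S ∧ IsCompl S X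

/-- `N` is small in `M`: `N + L = M` implies `L = M`. -/
def IsSmallSub (R : Type*) [Ring R] {M : Type*} [AddCommGroup M] [Module R M]
    (N : Submodule R M) : Prop :=
  ∀ L : Submodule R M, N ⊔ L = ⊤ → L = ⊤

/-- The (Jacobson) radical of a module: intersection of all maximal submodules. -/
def radM (R M : Type*) [Ring R] [AddCommGroup M] [Module R M] : Submodule R M :=
  sInf {m : Submodule R M | IsCoatom m}

/-- `M` is supplemented: every submodule `X` has a submodule `Y` with `X + Y = M`
and `X ∩ Y` small in `Y`. -/
def IsSupplemented (R M : Type*) [Ring R] [AddCommGroup M] [Module R M] : Prop :=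
  ∀ X : Submodule R M, ∃ Y : Submodule R M, X ⊔ Y = ⊤ ∧
    IsSmallSub R (Submodule.comap Y.subtype X)

/-- `M` is lifting: every submodule `N` admits a decomposition `M = A ⊕ B` with
`A ≤ N` and `N ∩ B` small in `B`. -/
def IsLifting (R M : Type*) [Ring R] [AddCommGroup M] [Module R M] : Prop :=
  ∀ N : Submodule R M, ∃ A B : Submodule R M, IsCompl A B ∧ A ≤ N ∧
    IsSmallSub R (Submodule.comap B.subtype N)

/-- `Y` is an `I`-supplement of `X` in `M`: `X + Y = M`, `X ∩ Y ⊆ IY`, and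
`X ∩ Y` is PSD in `Y`. -/
def IsISupplementOf {R : Type*} [Ring R] {M : Type*} [AddCommGroup M] [Module R M]
    (I : Ideal R) (Y X : Submodule R M) : Prop :=
  X ⊔ Y = ⊤ ∧ X ⊓ Y ≤ I • Y ∧ IsPSD R (Submodule.comap Y.subtype X)

/-- `M` is `I`-supplemented: every submodule has an `I`-supplement in `M`. -/
def IsISupplemented {R : Type*} [Ring R] (I : Ideal R) (M : Type*)
    [AddCommGroup M] [Module R M] : Prop :=
  ∀ X : Submodule R M, ∃ Y : Submodule R M, IsISupplementOf I Y X

section Helpers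

variable {R M : Type*} [Ring R] [AddCommGroup M] [Module R M]

lemma isCompl_comap_of {p A B : Submodule R M} (hA : A ≤ p) (hB : B ≤ p)
    (hsup : A ⊔ B = p) (hinf : A ⊓ B = ⊥) :
    IsCompl (comap p.subtype A) (comap p.subtype B) := by
  constructor
  · rw [disjoint_iff, eq_bot_iff]
    rintro x ⟨hxA, hxB⟩
    have : (x : M) ∈ A ⊓ B := ⟨hxA, hxB⟩
    rw [hinf, mem_bot] at this
    simpa [mem_bot] using Subtype.ext this
  · rw [codisjoint_iff, eq_top_iff']
    intro y
    have hy : (y : M) ∈ A ⊔ B := by rw [hsup]; exact y.2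
    rw [mem_sup] at hy
    obtain ⟨a, ha, b, hb, hab⟩ := hy
    refine mem_sup.mpr ⟨⟨a, hA ha⟩, ha, ⟨b, hB hb⟩, hb, ?_⟩
    exact Subtype.ext hab

lemma psd_pull {p N A : Submodule R M} (hpsd : IsPSD R (comap p.subtype N))
    (hA : A ≤ p) (hsum : (N ⊓ p) ⊔ A = p) :
    ∃ S : Submodule R M, S ≤ N ⊓ p ∧ Module.Projective R ↥S ∧ S ⊔ A = p ∧ S ⊓ A = ⊥ := by
  have hinj := p.injective_subtype
  have htop : comap p.subtype N ⊔ comap p.subtype A = ⊤ := by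
    apply Submodule.map_injective_of_injective hinj
    rw [Submodule.map_sup, map_comap_subtype, map_comap_subtype, Submodule.map_top,
      range_subtype, inf_comm p N, inf_of_le_right hA]
    exact hsum
  obtain ⟨S₁, hS₁N, hS₁proj, hS₁compl⟩ := hpsd _ htop
  refine ⟨map p.subtype S₁, ?_, ?_, ?_, ?_⟩
  · calc map p.subtype S₁ ≤ map p.subtype (comap p.subtype N) := map_mono hS₁N
      _ = p ⊓ N := map_comap_subtype ..
      _ = N ⊓ p := inf_comm ..
  · haveI := hS₁proj
    exact Module.Projective.of_equiv (p.equivSubtypeMap S₁)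
  · have h := congrArg (map p.subtype) (codisjoint_iff.mp hS₁compl.codisjoint)
    rwa [Submodule.map_sup, map_comap_subtype, Submodule.map_top, range_subtype,
      inf_of_le_right hA] at h
  · rw [eq_bot_iff]
    rintro x ⟨hxS, hxA⟩
    obtain ⟨y, hy, rfl⟩ := hxS
    have hyA : y ∈ comap p.subtype A := hxA
    have : y ∈ S₁ ⊓ comap p.subtype A := ⟨hy, hyA⟩
    rw [disjoint_iff.mp hS₁compl.disjoint, mem_bot] at this
    simp [this]

end Helpers

theorem stmt11 {R M : Type*} [Ring R] [AddCommGroup M] [Module R M]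
    (I : Ideal R) (K L H : Submodule R M)
    (h1 : IsISupplementOf I K L) (h2 : IsISupplementOf I L H) :
    IsISupplementOf I L K := by
  obtain ⟨hLK, hILK, hpsd1⟩ := h1
  obtain ⟨hHL, hIHL, hpsd2⟩ := h2
  refine ⟨by rw [sup_comm]; exact hLK, ?_, ?_⟩
  · -- K ⊓ L ≤ I • L
    have h1' : K ⊓ L ≤ I • K := by rw [inf_comm]; exact hILK
    have h2' : I • K ≤ I • H ⊔ I • L := by
      calc I • K ≤ I • (⊤ : Submodule R M) := Submodule.smul_mono le_rfl le_top
        _ = I • (H ⊔ L) := by rw [hHL]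
        _ = I • H ⊔ I • L := Submodule.smul_sup I H L
    have h3' : K ⊓ L ≤ (I • L ⊔ I • H) ⊓ L :=
      le_inf (h1'.trans (h2'.trans (by rw [sup_comm]))) inf_le_right
    calc K ⊓ L ≤ (I • L ⊔ I • H) ⊓ L := h3'
      _ = I • L ⊔ (I • H ⊓ L) := sup_inf_assoc_of_le _ Submodule.smul_le_right
      _ ≤ I • L ⊔ (H ⊓ L) := sup_le_sup_left (inf_le_inf_right _ Submodule.smul_le_right) _
      _ ≤ I • L ⊔ I • L := sup_le_sup_left hIHL _
      _ = I • L := sup_idem _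
  · -- PSD
    intro X hX
    set X' := map L.subtype X with hX'def
    have hX'le : X' ≤ L := map_subtype_le L X
    have h4 : (L ⊓ K) ⊔ X' = L := by
      have h := congrArg (map L.subtype) hX
      rwa [Submodule.map_sup, map_comap_subtype, Submodule.map_top, range_subtype] at h
    have hM : (H ⊔ X') ⊔ (L ⊓ K) = ⊤ := by
      rw [sup_assoc, sup_comm X' (L ⊓ K), h4, hHL]
    have hK : (L ⊓ K) ⊔ ((H ⊔ X') ⊓ K) = K := by
      have h := sup_inf_assoc_of_le (z := K) (H ⊔ X') (inf_le_right : L ⊓ K ≤ K)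
      rw [← h, sup_comm (L ⊓ K) (H ⊔ X'), hM, top_inf_eq]
    obtain ⟨S', hS'le, hS'proj, hS'sup, hS'inf⟩ := psd_pull hpsd1 inf_le_right hK
    have hS'leL : S' ≤ L := hS'le.trans inf_le_left
    have h5 : (H ⊔ X') ⊔ K = ⊤ :=
      eq_top_iff.mpr (by rw [← hM]; exact sup_le_sup_left inf_le_right _)
    have h6 : (S' ⊔ X') ⊔ H = ⊤ := by
      refine le_antisymm le_top ?_
      rw [← h5]
      refine sup_le (sup_le le_sup_right (le_sup_right.trans le_sup_left)) ?_
      rw [← hS'sup]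
      refine sup_le (le_sup_left.trans le_sup_left) ?_
      exact inf_le_left.trans (sup_le le_sup_right (le_sup_right.trans le_sup_left))
    have hS'X'leL : S' ⊔ X' ≤ L := sup_le hS'leL hX'le
    have hL : (H ⊓ L) ⊔ (S' ⊔ X') = L := by
      have h := sup_inf_assoc_of_le (z := L) H hS'X'leL
      rw [h6, top_inf_eq] at h
      rw [sup_comm]
      exact h.symm
    obtain ⟨T, hTle, hTproj, hTsup, hTinf⟩ := psd_pull hpsd2 hS'X'leL hL
    -- the complement W = T ⊔ S' of X' in L is projective
    set W := T ⊔ S' with hWdef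
    have hTleL : T ≤ L := hTle.trans inf_le_right
    have hWleL : W ≤ L := sup_le hTleL hS'leL
    have hWsup : W ⊔ X' = L := by rw [hWdef, sup_assoc]; exact hTsup
    have hS'X'bot : S' ⊓ X' = ⊥ := by
      rw [eq_bot_iff, ← hS'inf]
      exact le_inf inf_le_left (le_inf (inf_le_right.trans le_sup_right)
        (inf_le_left.trans (hS'le.trans inf_le_right)))
    have hTS'bot : T ⊓ S' = ⊥ := by
      rw [eq_bot_iff, ← hTinf]
      exact inf_le_inf_left _ le_sup_left
    have hWbot : W ⊓ X' = ⊥ := by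
      rw [eq_bot_iff]
      intro x hx
      have hxW : x ∈ T ⊔ S' := hx.1
      have hxX : x ∈ X' := hx.2
      obtain ⟨t, ht, s, hs, rfl⟩ := mem_sup.mp hxW
      have ht0 : t ∈ T ⊓ (S' ⊔ X') := by
        refine ⟨ht, ?_⟩
        have hts : t = (t + s) - s := by abel
        rw [hts]
        exact sub_mem (mem_sup_right hxX) (mem_sup_left hs)
      rw [hTinf, mem_bot] at ht0
      have hs0 : t + s ∈ S' ⊓ X' := by
        rw [ht0, zero_add]
        exact ⟨hs, by rw [← zero_add s, ← ht0]; exact hxX⟩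
      rw [hS'X'bot] at hs0
      exact hs0
    have hc : IsCompl (comap W.subtype T) (comap W.subtype S') :=
      isCompl_comap_of le_sup_left le_sup_right rfl hTS'bot
    haveI := hTproj
    haveI := hS'proj
    haveI : Module.Projective R ↥(comap W.subtype T) :=
      Module.Projective.of_equiv (comapSubtypeEquivOfLe (le_sup_left : T ≤ W)).symm
    haveI : Module.Projective R ↥(comap W.subtype S') :=
      Module.Projective.of_equiv (comapSubtypeEquivOfLe (le_sup_right : S' ≤ W)).symm
    have hWproj : Module.Projective R ↥W :=
      Module.Projective.of_equiv (prodEquivOfIsCompl _ _ hc)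
    -- transfer to ↥L and split
    set W₁ := comap L.subtype W with hW₁def
    haveI := hWproj
    haveI hW₁proj : Module.Projective R ↥W₁ :=
      Module.Projective.of_equiv (comapSubtypeEquivOfLe hWleL).symm
    have hXcomap : comap L.subtype X' = X :=
      comap_map_eq_of_injective L.injective_subtype X
    have hcompl : IsCompl W₁ X := by
      have h := isCompl_comap_of hWleL hX'le hWsup hWbot
      rwa [hXcomap] at h
    set π := W₁.linearProjOfIsCompl X hcompl with hπdef
    set K₁ := comap L.subtype K with hK₁def
    have hφsurj : Surjective (π ∘ₗ K₁.subtype) := by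
      intro w
      have hw : ((w : ↥L)) ∈ K₁ ⊔ X := by rw [hX]; exact mem_top
      rw [mem_sup] at hw
      obtain ⟨k, hk, x, hx, hkx⟩ := hw
      refine ⟨⟨k, hk⟩, ?_⟩
      have hl : π (w : ↥L) = w := linearProjOfIsCompl_apply_left hcompl w
      have hr : π x = 0 := projectionOnto_apply_of_mem_right hcompl hx
      have hk' : k = (w : ↥L) - x := eq_sub_of_add_eq hkx
      show π k = w
      rw [hk', map_sub, hl, hr, sub_zero]
    obtain ⟨σ, hσ⟩ := Module.projective_lifting_property (π ∘ₗ K₁.subtype) LinearMap.id hφsurj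
    set ψ := K₁.subtype ∘ₗ σ with hψdef
    have hπψ : ∀ w, π (ψ w) = w := fun w => by
      simpa [hψdef] using LinearMap.congr_fun hσ w
    refine ⟨LinearMap.range ψ, ?_, ?_, ?_⟩
    · rintro y ⟨w, rfl⟩
      exact (σ w).2
    · have hinj : Function.Injective ψ := by
        intro a b hab
        have h := congrArg π hab
        rwa [hπψ, hπψ] at h
      exact Module.Projective.of_equiv (LinearEquiv.ofInjective ψ hinj)
    · constructor
      · rw [disjoint_iff, eq_bot_iff]
        rintro y ⟨hyS, hyX⟩
        obtain ⟨w, rfl⟩ := hyS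
        have h0 : π (ψ w) = 0 := projectionOnto_apply_of_mem_right hcompl hyX
        rw [hπψ] at h0
        rw [mem_bot, h0, map_zero]
      · rw [codisjoint_iff, eq_top_iff]
        rintro y -
        have hmem : y - ψ (π y) ∈ X := by
          apply (linearProjOfIsCompl_apply_eq_zero_iff hcompl).mp
          rw [map_sub]; change π y - π (ψ (π y)) = 0; rw [hπψ, sub_self]
        have hdecomp : y = ψ (π y) + (y - ψ (π y)) := by abel
        rw [hdecomp]
        exact add_mem_sup ⟨π y, rfl⟩ hmem
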